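/- arXiv:1007.0584 — 3 statements merged into one kernel-verified Lean document; each statement's English description precedes it below -/
import Mathlib

section
/- The system of equations in real unknowns Q₁, Q₂ with Q₂ ≠ 0 given by 1 + Q₁²/(64Q₂²) = Q₁ and 1/4 − Q₁/(32Q₂) = Q₂ has no real solutions. -/
theorem product_system_no_solution (Q₁ Q₂ : ℝ) (hQ₂ : Q₂ ≠ 0) :
    ¬ (1 + Q₁ ^ 2 / (64 * Q₂ ^ 2) = Q₁ ∧ 1 / 4 - Q₁ / (32 * Q₂) = Q₂) := by
  rintro ⟨h1, h2⟩
  field_simp at h1 h2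
  have hq1 : Q₁ = 8 * Q₂ - 32 * Q₂ ^ 2 := by linarith
  have hp : Q₂ ^ 2 > 0 := by positivity
  nlinarith [sq_nonneg (Q₂ * (6 * Q₂ - 1)), hp, sq_nonneg Q₂]
end

section
/- For Q = 1/4 + √3/6, the function x(t) = (1/(4Q))t² + ((4Q−1)/(4Q))t, which equals x(t) = (3/(3+2√3))t² + (2√3/(2√3+3))t, satisfies x(0) = 0, x(1) = 1, and (∫_0^1 t·x'(t) dt)/(∫_0^1 (x'(t))² dt) = Q. -/
lemma deriv_quad (a b : ℝ) (t : ℝ) :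
    deriv (fun t : ℝ => a * t ^ 2 + b * t) t = 2 * a * t + b := by
  have : HasDerivAt (fun t : ℝ => a * t ^ 2 + b * t) (a * (2 * t) + b) t := by
    have h1 : HasDerivAt (fun t : ℝ => t ^ 2) (2 * t) t := by
      simpa using (hasDerivAt_pow 2 t)
    have h2 : HasDerivAt (fun t : ℝ => t) 1 t := hasDerivAt_id t
    have h2' : HasDerivAt (fun t : ℝ => b * t) b t := by simpa using h2.const_mul b
    exact ((h1.const_mul a).add h2')
  rw [this.deriv]; ring

lemma sqrt3 : Real.sqrt 3 * Real.sqrt 3 = 3 := Real.mul_self_sqrt (by norm_num)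

lemma sqrt3_pos : (0:ℝ) < Real.sqrt 3 := Real.sqrt_pos.mpr (by norm_num)

theorem quotient_maximizer_verification :
    let Q : ℝ := 1 / 4 + Real.sqrt 3 / 6
    let x : ℝ → ℝ := fun t => (1 / (4 * Q)) * t ^ 2 + ((4 * Q - 1) / (4 * Q)) * t
    (∀ t : ℝ, x t = (3 / (3 + 2 * Real.sqrt 3)) * t ^ 2
        + (2 * Real.sqrt 3 / (2 * Real.sqrt 3 + 3)) * t) ∧
      x 0 = 0 ∧ x 1 = 1 ∧
      (∫ t in (0:ℝ)..1, t * deriv x t) / (∫ t in (0:ℝ)..1, (deriv x t) ^ 2) = Q := by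
  intro Q x
  have s3 := sqrt3
  have s3p := sqrt3_pos
  have hQ : Q = 1 / 4 + Real.sqrt 3 / 6 := rfl
  have hQpos : (0:ℝ) < Q := by rw [hQ]; positivity
  have hQne : (4 * Q) ≠ 0 := by positivity
  set a : ℝ := 1 / (4 * Q) with ha
  set b : ℝ := (4 * Q - 1) / (4 * Q) with hb
  have hx : x = fun t => a * t ^ 2 + b * t := rfl
  have hderiv : ∀ t, deriv x t = 2 * a * t + b := fun t => deriv_quad a b t
  refine ⟨?_, ?_, ?_, ?_⟩
  · intro t
    rw [hx]
    have h1 : a = 3 / (3 + 2 * Real.sqrt 3) := by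
      rw [ha, hQ]; field_simp; nlinarith [s3]
    have h2 : b = 2 * Real.sqrt 3 / (2 * Real.sqrt 3 + 3) := by
      rw [hb, hQ]; field_simp; nlinarith [s3]
    simp only [h1, h2]
  · simp [hx]
  · have hab : a + b = 1 := by rw [ha, hb]; field_simp; ring
    simp only [hx]; linarith [hab]
  · have ipow : IntervalIntegrable (fun t : ℝ => t ^ 2) MeasureTheory.volume 0 1 :=
      (continuous_pow 2).intervalIntegrable 0 1
    have iid : IntervalIntegrable (fun t : ℝ => t) MeasureTheory.volume 0 1 :=
      continuous_id.intervalIntegrable 0 1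
    have I1 : (∫ t in (0:ℝ)..1, t * deriv x t) = 2 * a / 3 + b / 2 := by
      have h : ∀ t : ℝ, t * deriv x t = 2 * a * t ^ 2 + b * t := by
        intro t; rw [hderiv]; ring
      simp only [h]
      rw [intervalIntegral.integral_add (ipow.const_mul _) (iid.const_mul _),
        intervalIntegral.integral_const_mul, intervalIntegral.integral_const_mul,
        integral_pow, integral_id]
      norm_num; ring
    have I2 : (∫ t in (0:ℝ)..1, (deriv x t) ^ 2) = 4 * a ^ 2 / 3 + 2 * a * b + b ^ 2 := by
      have h : ∀ t : ℝ, (deriv x t) ^ 2 = 4 * a ^ 2 * t ^ 2 + (4 * a * b) * t + b ^ 2 := by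
        intro t; rw [hderiv]; ring
      simp only [h]
      rw [intervalIntegral.integral_add ((ipow.const_mul _).add (iid.const_mul _))
        (intervalIntegrable_const),
        intervalIntegral.integral_add (ipow.const_mul _) (iid.const_mul _),
        intervalIntegral.integral_const_mul, intervalIntegral.integral_const_mul,
        integral_pow, integral_id]
      norm_num; ring
    have key : 48 * Q ^ 2 - 24 * Q - 1 = 0 := by
      rw [hQ]; nlinarith [s3]
    have hN : 2 * a / 3 + b / 2 = 1 / 2 + 1 / (24 * Q) := by
      rw [ha, hb]; field_simp; ring
    have hD : 4 * a ^ 2 / 3 + 2 * a * b + b ^ 2 = 1 + 1 / (48 * Q ^ 2) := by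
      rw [ha, hb]; field_simp; ring
    have hDpos : (0:ℝ) < 1 + 1 / (48 * Q ^ 2) := by positivity
    rw [I1, I2, hN, hD, div_eq_iff (ne_of_gt hDpos)]
    have hQne' : Q ≠ 0 := ne_of_gt hQpos
    field_simp
    nlinarith [key, hQpos, sq_nonneg Q]
end

section
/- Define, for a real parameter c, the function x_c on {0, 1/2, 1} by x_c(0) = 0, x_c(1/2) = 1/2 − c, x_c(1) = 1, and set L(c) = ( (1/2)·( 0·2(1/2−c) + (1/2)·2(1/2+c) ) ) / ( (1/2)·( 4(1/2−c)² + 4(1/2+c)² ) ), i.e. the quotient (∫_0^1 t·xᐃ Δt)/(∫_0^1 (xᐃ)² Δt) on the time scale {0,1/2,1}. Then with c = 1/(16Q) and Q = 1/8 + √2/8, the self-consistency equation L(c) = Q holds. -/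
theorem timescale_quotient_selfconsistency :
    let L : ℝ → ℝ := fun c =>
      ((1/2) * (0 * (2 * (1/2 - c)) + (1/2) * (2 * (1/2 + c)))) /
        ((1/2) * (4 * (1/2 - c) ^ 2 + 4 * (1/2 + c) ^ 2))
    let Q : ℝ := 1 / 8 + Real.sqrt 2 / 8
    let c : ℝ := 1 / (16 * Q)
    L c = Q := by
  intro L Q c
  have hs : Real.sqrt 2 ^ 2 = 2 := Real.sq_sqrt (by norm_num)
  have hpos : (0:ℝ) < Real.sqrt 2 := Real.sqrt_pos.mpr (by norm_num)
  have hQ : Q ≠ 0 := by positivity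
  simp only [L, Q, c]
  rw [div_eq_iff]
  · field_simp
    nlinarith [hs, hpos]
  · nlinarith [hs, hpos, sq_nonneg (Real.sqrt 2 - 1)]
end
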